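/- arXiv:2410.04837 — 2 statements merged into one kernel-verified Lean document; each statement's English description precedes it below -/
import Mathlib

section
/- Let C ∈ ℂ^{N×N} be a matrix with Jordan condition number κ̄_C and largest Jordan block dimension d, and suppose δ ∈ (0,1) satisfies: Re(λ) ∉ (0, 2δ) for every eigenvalue λ of C. Then the restricted Kreiss constant K_δ(C) := δ · sup_{y∈ℝ} ‖((δ+iy)I − C)^{−1}‖ is at most κ̄_C · δ^{−(d−1)} · (1−δ^d)/(1−δ). -/
open scoped Matrix.Norms.L2Operator

/-- The `d × d` lower-triangular Jordan block with diagonal `lam` and subdiagonal `1`. -/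
def jordanBlock (lam : ℂ) (d : ℕ) : Matrix (Fin d) (Fin d) ℂ :=
  fun i j => if (i : ℕ) = j then lam else if (i : ℕ) = (j : ℕ) + 1 then 1 else 0

/-- The nilpotent shift matrix. -/
def shiftM (n : ℕ) : Matrix (Fin n) (Fin n) ℂ :=
  Matrix.of fun i j => if (i : ℕ) = (j : ℕ) + 1 then 1 else 0

lemma shiftM_pow (n k : ℕ) :
    (shiftM n) ^ k = Matrix.of fun (i j : Fin n) => if (i : ℕ) = (j : ℕ) + k then 1 else 0 := by
  induction k with
  | zero =>
    ext i j
    simp [Matrix.one_apply, Fin.ext_iff, eq_comm]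
  | succ k ih =>
    ext i j
    rw [pow_succ, ih]
    simp only [Matrix.mul_apply, Matrix.of_apply, shiftM, ite_mul, one_mul, zero_mul]
    by_cases hj : (j : ℕ) + 1 < n
    · rw [Finset.sum_eq_single (⟨(j : ℕ) + 1, hj⟩ : Fin n)]
      · have h1 : ((⟨(j : ℕ) + 1, hj⟩ : Fin n) : ℕ) = (j : ℕ) + 1 := rfl
        rw [h1, show (j : ℕ) + (k + 1) = ((j : ℕ) + 1) + k by omega]
        simp
      · intro x _ hx
        have : (x : ℕ) ≠ (j : ℕ) + 1 := fun e => hx (Fin.ext e)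
        simp [this]
      · intro hmem
        exact absurd (Finset.mem_univ _) hmem
    · have hi : (i : ℕ) < n := i.isLt
      have : ¬ ((i : ℕ) = (j : ℕ) + (k + 1)) := by omega
      rw [if_neg this]
      apply Finset.sum_eq_zero
      intro x _
      have hx : (x : ℕ) < n := x.isLt
      have : ¬ ((x : ℕ) = (j : ℕ) + 1) := by omega
      simp [this]

lemma shiftM_pow_zero (n k : ℕ) (h : n ≤ k) : (shiftM n) ^ k = 0 := by
  rw [shiftM_pow]
  ext i j
  have : (i : ℕ) < n := i.isLt
  have : ¬ ((i:ℕ) = (j:ℕ) + k) := by omega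
  simp [this]

lemma jordan_sub (lam z : ℂ) (n : ℕ) :
    z • (1 : Matrix (Fin n) (Fin n) ℂ) - jordanBlock lam n
      = (z - lam) • (1 : Matrix (Fin n) (Fin n) ℂ) - shiftM n := by
  ext i j
  by_cases h : (i : ℕ) = (j : ℕ)
  · have : i = j := Fin.ext h
    subst this
    have : ¬ ((i:ℕ) = (i:ℕ) + 1) := by omega
    simp [jordanBlock, shiftM, Matrix.one_apply, this]
  · have hij : i ≠ j := fun e => h (by rw [e])
    simp [jordanBlock, shiftM, Matrix.one_apply, h, hij]

/-- Truncated Neumann series for the resolvent of a Jordan block. -/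
noncomputable def resolventJ (d n : ℕ) (w : ℂ) : Matrix (Fin n) (Fin n) ℂ :=
  ∑ k ∈ Finset.range d, w ^ (k + 1) • (shiftM n) ^ k

lemma jordan_mul_resolventJ (lam z : ℂ) (n d : ℕ) (hnd : n ≤ d) (hz : z ≠ lam) :
    (z • (1 : Matrix (Fin n) (Fin n) ℂ) - jordanBlock lam n)
      * resolventJ d n (z - lam)⁻¹ = 1 := by
  have ha : z - lam ≠ 0 := sub_ne_zero.mpr hz
  rw [jordan_sub, resolventJ, Finset.mul_sum]
  have key : ∀ k : ℕ,
      ((z - lam) • (1 : Matrix (Fin n) (Fin n) ℂ) - shiftM n)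
          * ((z - lam)⁻¹ ^ (k + 1) • (shiftM n) ^ k)
        = (z - lam)⁻¹ ^ k • (shiftM n) ^ k
          - (z - lam)⁻¹ ^ (k + 1) • (shiftM n) ^ (k + 1) := by
    intro k
    rw [Matrix.sub_mul, Matrix.smul_mul, Matrix.one_mul, Matrix.mul_smul, smul_smul,
      ← pow_succ' (shiftM n) k]
    congr 2
    rw [pow_succ]
    field_simp
  rw [Finset.sum_congr rfl fun k _ => key k, Finset.sum_range_sub']
  rw [shiftM_pow_zero n d hnd]
  simp

open Matrix in
/-- A matrix which acts as `x ↦ v i * x (g i)` (partial injection with weights) has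
L2 operator norm at most the sup of the weights. -/
lemma l2_opNorm_le_of_canonical {ι : Type*} [Fintype ι] [DecidableEq ι]
    (M : Matrix ι ι ℂ) (p : ι → Prop) [DecidablePred p] (g : ι → ι)
    (hg : Set.InjOn g {x | p x}) (v : ι → ℂ) (c : ℝ) (hc : 0 ≤ c)
    (hv : ∀ i, ‖v i‖ ≤ c)
    (hM : ∀ i j, M i j = if p i ∧ g i = j then v i else 0) :
    ‖M‖ ≤ c := by
  rw [Matrix.l2_opNorm_def]
  refine ContinuousLinearMap.opNorm_le_bound _ hc fun x => ?_
  set y : ι → ℂ := WithLp.equiv 2 (ι → ℂ) x with hy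
  have hmv : ∀ i, (M *ᵥ y) i = if p i then v i * y (g i) else 0 := by
    intro i
    simp only [Matrix.mulVec, dotProduct, hM]
    by_cases hp : p i
    · simp [hp]
    · simp [hp]
  have hnx : ‖x‖ = Real.sqrt (∑ j, ‖y j‖ ^ 2) := EuclideanSpace.norm_eq x
  have happ : ‖(Matrix.toEuclideanLin.trans LinearMap.toContinuousLinearMap M) x‖
      = Real.sqrt (∑ i, ‖(M *ᵥ y) i‖ ^ 2) := by
    rw [EuclideanSpace.norm_eq]
    congr 1
  have key : ∑ i, ‖(M *ᵥ y) i‖ ^ 2 ≤ c ^ 2 * ∑ j, ‖y j‖ ^ 2 := by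
    classical
    have h1 : ∑ i, ‖(M *ᵥ y) i‖ ^ 2
        = ∑ i ∈ Finset.univ.filter p, ‖v i * y (g i)‖ ^ 2 := by
      rw [← Finset.sum_filter_add_sum_filter_not Finset.univ p]
      have h2 : ∑ i ∈ Finset.univ.filter (fun i => ¬ p i), ‖(M *ᵥ y) i‖ ^ 2 = 0 := by
        apply Finset.sum_eq_zero
        intro i hi
        rw [Finset.mem_filter] at hi
        rw [hmv i, if_neg hi.2]
        simp
      rw [h2, add_zero]
      apply Finset.sum_congr rfl
      intro i hi
      rw [Finset.mem_filter] at hi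
      rw [hmv i, if_pos hi.2]
    rw [h1]
    have h3 : ∑ i ∈ Finset.univ.filter p, ‖v i * y (g i)‖ ^ 2
        ≤ ∑ i ∈ Finset.univ.filter p, c ^ 2 * ‖y (g i)‖ ^ 2 := by
      apply Finset.sum_le_sum
      intro i _
      rw [norm_mul, mul_pow]
      have := hv i
      gcongr
    refine h3.trans ?_
    rw [← Finset.mul_sum]
    have h4 : ∑ i ∈ Finset.univ.filter p, ‖y (g i)‖ ^ 2
        = ∑ j ∈ (Finset.univ.filter p).image g, ‖y j‖ ^ 2 := by
      rw [Finset.sum_image]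
      intro a ha b hb hab
      rw [Finset.mem_coe, Finset.mem_filter] at ha hb
      exact hg ha.2 hb.2 hab
    rw [h4]
    have h5 : ∑ j ∈ (Finset.univ.filter p).image g, ‖y j‖ ^ 2 ≤ ∑ j, ‖y j‖ ^ 2 :=
      Finset.sum_le_sum_of_subset_of_nonneg (Finset.subset_univ _)
        (fun j _ _ => by positivity)
    gcongr
  rw [happ, hnx, ← Real.sqrt_sq hc, ← Real.sqrt_mul (by positivity)]
  exact Real.sqrt_le_sqrt key

open Matrix in
lemma norm_blockDiagonal_shift (s : ℕ) (dsz : Fin s → ℕ) (w : Fin s → ℂ) (k : ℕ)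
    (c : ℝ) (hc : 0 ≤ c) (hw : ∀ l, ‖w l‖ ≤ c) :
    ‖Matrix.blockDiagonal' (fun l => w l • (shiftM (dsz l)) ^ k)‖ ≤ c := by
  classical
  refine l2_opNorm_le_of_canonical _
    (fun x : Σ l, Fin (dsz l) => k ≤ (x.2 : ℕ))
    (fun x => ⟨x.1, ⟨(x.2 : ℕ) - k, lt_of_le_of_lt (Nat.sub_le _ _) x.2.isLt⟩⟩)
    ?_ (fun x => w x.1) c hc (fun x => hw x.1) ?_
  · rintro ⟨l, i⟩ hi ⟨l', i'⟩ hi' h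
    simp only [Set.mem_setOf_eq] at hi hi'
    obtain ⟨h1, h2⟩ := Sigma.mk.inj_iff.mp h
    subst h1
    have h3 : (i : ℕ) - k = (i' : ℕ) - k := congrArg Fin.val (eq_of_heq h2)
    have : (i : ℕ) = (i' : ℕ) := by omega
    exact congrArg _ (Fin.ext this)
  · rintro ⟨l, i⟩ ⟨l', j⟩
    by_cases h : l = l'
    · subst h
      rw [Matrix.blockDiagonal'_apply_eq, shiftM_pow]
      simp only [Matrix.smul_apply, Matrix.of_apply, smul_eq_mul]
      by_cases hij : (i : ℕ) = (j : ℕ) + k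
      · have hki : k ≤ (i : ℕ) := by omega
        have hsub : (⟨(i : ℕ) - k, lt_of_le_of_lt (Nat.sub_le _ _) i.isLt⟩ : Fin (dsz l)) = j :=
          Fin.ext (show (i : ℕ) - k = (j : ℕ) by omega)
        rw [if_pos hij, if_pos ⟨hki, by rw [hsub]⟩, mul_one]
      · rw [if_neg hij, if_neg, mul_zero]
        rintro ⟨hki, hgj⟩
        obtain ⟨-, h2⟩ := Sigma.mk.inj_iff.mp hgj
        have : (i : ℕ) - k = (j : ℕ) := congrArg Fin.val (eq_of_heq h2)
        omega
    · rw [Matrix.blockDiagonal'_apply_ne _ _ _ h, if_neg]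
      rintro ⟨-, hgj⟩
      exact h (Sigma.mk.inj_iff.mp hgj).1

lemma geom_alg (δ : ℝ) (hδ0 : 0 < δ) (hδ1 : δ < 1) (d : ℕ) :
    δ * ∑ k ∈ Finset.range d, δ⁻¹ ^ (k + 1)
      = δ⁻¹ ^ (d - 1) * ((1 - δ ^ d) / (1 - δ)) := by
  have hδ : δ ≠ 0 := ne_of_gt hδ0
  have h1 : (1 : ℝ) - δ ≠ 0 := by linarith
  have hgeom : (1 - δ ^ d) / (1 - δ) = ∑ k ∈ Finset.range d, δ ^ k := by
    rw [geom_sum_eq (by linarith : δ ≠ 1) d]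
    rw [div_eq_div_iff h1 (show δ - 1 ≠ 0 by linarith)]
    ring
  rw [hgeom, Finset.mul_sum, Finset.mul_sum]
  have hL : ∀ k : ℕ, δ * δ⁻¹ ^ (k + 1) = δ⁻¹ ^ k := by
    intro k
    rw [pow_succ']
    field_simp
  have hR : ∀ k ∈ Finset.range d, δ⁻¹ ^ (d - 1) * δ ^ k = δ⁻¹ ^ (d - 1 - k) := by
    intro k hk
    rw [Finset.mem_range] at hk
    rw [show δ⁻¹ ^ (d - 1) = δ⁻¹ ^ (d - 1 - k) * δ⁻¹ ^ k from by
        rw [← pow_add]; congr 1; omega,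
      mul_assoc, ← mul_pow, inv_mul_cancel₀ hδ, one_pow, mul_one]
  rw [Finset.sum_congr rfl hR, Finset.sum_congr rfl (fun k _ => hL k),
    Finset.sum_range_reflect (fun k => δ⁻¹ ^ k) d]


/-- Bound on the restricted Kreiss constant
`K_δ(C) = δ · sup_{y ∈ ℝ} ‖((δ+iy)I − C)⁻¹‖` for a matrix `C = T J T⁻¹` in Jordan form
with largest block of size at most `d`, when no eigenvalue has real part in `(0, 2δ)`. -/
theorem restricted_kreiss_constant_bound
    (s : ℕ) (dsz : Fin s → ℕ) (lam : Fin s → ℂ) (d : ℕ) (hd : ∀ l, dsz l ≤ d)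
    (C T : Matrix (Σ l, Fin (dsz l)) (Σ l, Fin (dsz l)) ℂ) (hT : IsUnit T)
    (hC : C = T * Matrix.blockDiagonal' (fun l => jordanBlock (lam l) (dsz l)) * T⁻¹)
    (δ : ℝ) (hδ0 : 0 < δ) (hδ1 : δ < 1)
    (hspec : ∀ l, (lam l).re ∉ Set.Ioo (0 : ℝ) (2 * δ)) :
    δ * ⨆ y : ℝ,
        ‖((((δ : ℂ) + y * Complex.I) •
            (1 : Matrix (Σ l, Fin (dsz l)) (Σ l, Fin (dsz l)) ℂ)) - C)⁻¹‖ ≤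
      ‖T‖ * ‖T⁻¹‖ * (δ⁻¹ ^ (d - 1) * ((1 - δ ^ d) / (1 - δ))) := by
  classical
  have hdet : IsUnit T.det := (Matrix.isUnit_iff_isUnit_det T).mp hT
  have hTT : T * T⁻¹ = 1 := Matrix.mul_nonsing_inv T hdet
  have hTT' : T⁻¹ * T = 1 := Matrix.nonsing_inv_mul T hdet
  set R : ℝ := ∑ k ∈ Finset.range d, δ⁻¹ ^ (k + 1) with hRdef
  set J := Matrix.blockDiagonal' (fun l => jordanBlock (lam l) (dsz l)) with hJ
  have main : ∀ y : ℝ, ‖((((δ : ℂ) + y * Complex.I) •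
      (1 : Matrix (Σ l, Fin (dsz l)) (Σ l, Fin (dsz l)) ℂ)) - C)⁻¹‖
      ≤ ‖T‖ * (R * ‖T⁻¹‖) := by
    intro y
    set z : ℂ := (δ : ℂ) + y * Complex.I with hzdef
    have habs : ∀ l, δ ≤ ‖z - lam l‖ := by
      intro l
      have h := hspec l
      rw [Set.mem_Ioo, not_and_or, not_lt, not_lt] at h
      have hre : (z - lam l).re = δ - (lam l).re := by
        simp [hzdef]
      refine le_trans ?_ (Complex.abs_re_le_norm _)
      rw [hre]
      rcases h with h | h
      · rw [abs_of_nonneg (by linarith)]; linarith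
      · rw [abs_of_nonpos (by linarith)]; linarith
    have hzne : ∀ l, z ≠ lam l := by
      intro l e
      have h := habs l
      rw [e, sub_self] at h
      simp at h
      linarith
    have hwle : ∀ l, ‖(z - lam l)⁻¹‖ ≤ δ⁻¹ := by
      intro l
      rw [norm_inv]
      exact inv_anti₀ hδ0 (habs l)
    set N := Matrix.blockDiagonal' (fun l => resolventJ d (dsz l) (z - lam l)⁻¹) with hN
    have h1 : z • (1 : Matrix (Σ l, Fin (dsz l)) (Σ l, Fin (dsz l)) ℂ) - J
        = Matrix.blockDiagonal'
            (fun l => z • (1 : Matrix (Fin (dsz l)) (Fin (dsz l)) ℂ)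
              - jordanBlock (lam l) (dsz l)) := by
      have he : (fun l => z • (1 : Matrix (Fin (dsz l)) (Fin (dsz l)) ℂ)
            - jordanBlock (lam l) (dsz l))
          = z • (1 : ∀ l, Matrix (Fin (dsz l)) (Fin (dsz l)) ℂ)
            - (fun l => jordanBlock (lam l) (dsz l)) := rfl
      rw [he, Matrix.blockDiagonal'_sub, Matrix.blockDiagonal'_smul,
        Matrix.blockDiagonal'_one, hJ]
    have hJN : (z • (1 : Matrix (Σ l, Fin (dsz l)) (Σ l, Fin (dsz l)) ℂ) - J) * N = 1 := by
      rw [h1, hN, ← Matrix.blockDiagonal'_mul]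
      have hb : (fun l => (z • (1 : Matrix (Fin (dsz l)) (Fin (dsz l)) ℂ)
            - jordanBlock (lam l) (dsz l)) * resolventJ d (dsz l) (z - lam l)⁻¹)
          = (1 : ∀ l, Matrix (Fin (dsz l)) (Fin (dsz l)) ℂ) :=
        funext fun l => jordan_mul_resolventJ (lam l) z (dsz l) d (hd l) (hzne l)
      rw [hb, Matrix.blockDiagonal'_one]
    have hconj : ∀ A B : Matrix (Σ l, Fin (dsz l)) (Σ l, Fin (dsz l)) ℂ,
        (T * A * T⁻¹) * (T * B * T⁻¹) = T * (A * B) * T⁻¹ := by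
      intro A B
      simp only [Matrix.mul_assoc]
      rw [← Matrix.mul_assoc T⁻¹ T, hTT', Matrix.one_mul]
    have hCz : z • (1 : Matrix (Σ l, Fin (dsz l)) (Σ l, Fin (dsz l)) ℂ) - C
        = T * (z • 1 - J) * T⁻¹ := by
      rw [hC, Matrix.mul_sub, Matrix.sub_mul]
      congr 1
      rw [Matrix.mul_smul, Matrix.mul_one, Matrix.smul_mul, hTT]
    have hinv : (z • (1 : Matrix (Σ l, Fin (dsz l)) (Σ l, Fin (dsz l)) ℂ) - C)⁻¹
        = T * N * T⁻¹ := by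
      apply Matrix.inv_eq_right_inv
      rw [hCz, hconj, hJN, Matrix.mul_one, hTT]
    have hNnorm : ‖N‖ ≤ R := by
      have hsplit : N = ∑ k ∈ Finset.range d,
          Matrix.blockDiagonal'
            (fun l => ((z - lam l)⁻¹) ^ (k + 1) • (shiftM (dsz l)) ^ k) := by
        rw [hN]
        ext ik jk
        rcases ik with ⟨l, i⟩
        rcases jk with ⟨l', j⟩
        rw [Matrix.sum_apply]
        by_cases h : l = l'
        · subst h
          simp only [Matrix.blockDiagonal'_apply_eq, resolventJ, Matrix.sum_apply]
        · simp only [Matrix.blockDiagonal'_apply_ne _ _ _ h]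
          simp
      rw [hsplit, hRdef]
      refine (norm_sum_le _ _).trans ?_
      refine Finset.sum_le_sum fun k _ => ?_
      refine norm_blockDiagonal_shift s dsz _ k _ (by positivity) fun l => ?_
      rw [norm_pow]
      exact pow_le_pow_left₀ (norm_nonneg _) (hwle l) _
    have hfin : ‖T * N * T⁻¹‖ ≤ ‖T‖ * (R * ‖T⁻¹‖) := by
      refine (Matrix.l2_opNorm_mul _ _).trans ?_
      have h2 : ‖T * N‖ ≤ ‖T‖ * R :=
        (Matrix.l2_opNorm_mul _ _).trans
          (mul_le_mul_of_nonneg_left hNnorm (norm_nonneg _))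
      calc ‖T * N‖ * ‖T⁻¹‖ ≤ (‖T‖ * R) * ‖T⁻¹‖ :=
            mul_le_mul_of_nonneg_right h2 (norm_nonneg _)
        _ = ‖T‖ * (R * ‖T⁻¹‖) := by ring
    rw [hinv]
    exact hfin
  have hsup := ciSup_le main
  have h2 := mul_le_mul_of_nonneg_left hsup hδ0.le
  refine h2.trans_eq ?_
  rw [show δ * (‖T‖ * (R * ‖T⁻¹‖)) = ‖T‖ * ‖T⁻¹‖ * (δ * R) by ring,
    hRdef, geom_alg δ hδ0 hδ1 d]
end

section
/- Let |ψ⟩ = Σ_l β_l |λ_l⟩ be a unit vector, where {|λ_l⟩} are the columns of a matrix S with condition number κ_S = σ_max(S)/σ_min(S). Then for any collection of vectors {|χ_l⟩} in an auxiliary Hilbert space, (min_l ‖|χ_l⟩‖)/κ_S ≤ ‖Σ_l β_l |χ_l⟩ ⊗ |λ_l⟩‖ ≤ κ_S · max_l ‖|χ_l⟩‖. -/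
lemma euclid_norm_sq' {ι : Type*} [Fintype ι] (x : EuclideanSpace ℂ ι) :
    ‖x‖ ^ 2 = ∑ i, ‖x i‖ ^ 2 := by
  rw [EuclideanSpace.norm_eq, Real.sq_sqrt (Finset.sum_nonneg fun i _ => sq_nonneg _)]

/-- Propagation of norms through a superposition: if `|ψ⟩ = Σ_l β_l |λ_l⟩` is a unit
vector, where `|λ_l⟩` are the columns of `S` and `κ_S = σ_max/σ_min`, then for any
ancilla vectors `|χ_l⟩`,
`(min_l ‖χ_l‖)/κ_S ≤ ‖Σ_l β_l |χ_l⟩ ⊗ |λ_l⟩‖ ≤ κ_S · max_l ‖χ_l‖`. -/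
theorem tensor_superposition_norm_bounds
    (b m k : ℕ) (S : Matrix (Fin m) (Fin k) ℂ) (σmin σmax : ℝ)
    (hσmin : 0 < σmin) (hσmax : 0 < σmax)
    (hmin : ∀ v : EuclideanSpace ℂ (Fin k), σmin * ‖v‖ ≤ ‖Matrix.toEuclideanLin S v‖)
    (hmax : ∀ v : EuclideanSpace ℂ (Fin k), ‖Matrix.toEuclideanLin S v‖ ≤ σmax * ‖v‖)
    (β : EuclideanSpace ℂ (Fin k)) (hψ : ‖Matrix.toEuclideanLin S β‖ = 1)
    (χ : Fin k → EuclideanSpace ℂ (Fin b)) :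
    (⨅ l, ‖χ l‖) / (σmax / σmin) ≤
      ‖(WithLp.equiv 2 (Fin b × Fin m → ℂ)).symm
        (fun p => ∑ l, β l * χ l p.1 * S p.2 l)‖ ∧
    ‖(WithLp.equiv 2 (Fin b × Fin m → ℂ)).symm
        (fun p => ∑ l, β l * χ l p.1 * S p.2 l)‖ ≤
      (σmax / σmin) * ⨆ l, ‖χ l‖ := by
  have hk : Nonempty (Fin k) := by
    by_contra h
    have hβ : β = 0 := by ext i; exact absurd ⟨i⟩ h
    rw [hβ, map_zero, norm_zero] at hψ
    exact one_ne_zero hψ.symm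
  have l₀ : Fin k := hk.some
  set c := ⨅ l, ‖χ l‖ with hc
  set M := ⨆ l, ‖χ l‖ with hM
  have hc0 : 0 ≤ c := le_ciInf fun l => norm_nonneg _
  have hcle : ∀ l, c ≤ ‖χ l‖ := fun l => ciInf_le (Finite.bddBelow_range fun l => ‖χ l‖) l
  have hMle : ∀ l, ‖χ l‖ ≤ M := fun l => le_ciSup (Finite.bddAbove_range fun l => ‖χ l‖) l
  have hM0 : 0 ≤ M := (norm_nonneg _).trans (hMle l₀)
  -- bounds on ‖β‖
  have hβlo : 1 / σmax ≤ ‖β‖ := by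
    rw [div_le_iff₀ hσmax]
    have := hmax β
    rw [hψ] at this
    linarith [this]
  have hβhi : ‖β‖ ≤ 1 / σmin := by
    rw [le_div_iff₀ hσmin]
    have := hmin β
    rw [hψ] at this
    linarith [this]
  set w : Fin b → EuclideanSpace ℂ (Fin k) :=
    fun p1 => (WithLp.equiv 2 (Fin k → ℂ)).symm (fun l => β l * χ l p1) with hw
  set T := (WithLp.equiv 2 (Fin b × Fin m → ℂ)).symm
      (fun p : Fin b × Fin m => ∑ l, β l * χ l p.1 * S p.2 l) with hTdef
  have hT : ∀ p : Fin b × Fin m, T p = Matrix.toEuclideanLin S (w p.1) p.2 := by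
    intro p
    simp only [hTdef, hw, Matrix.toEuclideanLin_apply, WithLp.equiv_symm_apply,
      PiLp.toLp_apply, Matrix.mulVec, dotProduct]
    exact Finset.sum_congr rfl fun l _ => by ring
  have hTsq : ‖T‖ ^ 2 = ∑ p1, ‖Matrix.toEuclideanLin S (w p1)‖ ^ 2 := by
    rw [euclid_norm_sq' T, Fintype.sum_prod_type]
    simp_rw [euclid_norm_sq']
    exact Finset.sum_congr rfl fun p1 _ => Finset.sum_congr rfl fun p2 _ => by
      rw [hT (p1, p2)]
  have hwsq : ∑ p1, ‖w p1‖ ^ 2 = ∑ l, ‖β l‖ ^ 2 * ‖χ l‖ ^ 2 := by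
    simp_rw [euclid_norm_sq', hw, WithLp.equiv_symm_apply, norm_mul, mul_pow,
      Finset.mul_sum]
    exact Finset.sum_comm
  have hβsq : ‖β‖ ^ 2 = ∑ l, ‖β l‖ ^ 2 := euclid_norm_sq' β
  -- squared bounds
  have hlowsq : (σmin * (c * ‖β‖)) ^ 2 ≤ ‖T‖ ^ 2 := by
    rw [hTsq]
    calc (σmin * (c * ‖β‖)) ^ 2 = σmin ^ 2 * (c ^ 2 * ‖β‖ ^ 2) := by ring
      _ ≤ σmin ^ 2 * (∑ l, ‖β l‖ ^ 2 * ‖χ l‖ ^ 2) := by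
          refine mul_le_mul_of_nonneg_left ?_ (sq_nonneg _)
          rw [hβsq, Finset.mul_sum]
          refine Finset.sum_le_sum fun l _ => ?_
          calc c ^ 2 * ‖β l‖ ^ 2 = ‖β l‖ ^ 2 * c ^ 2 := by ring
            _ ≤ ‖β l‖ ^ 2 * ‖χ l‖ ^ 2 := by
                refine mul_le_mul_of_nonneg_left ?_ (sq_nonneg _)
                exact pow_le_pow_left₀ hc0 (hcle l) 2
      _ = ∑ p1, σmin ^ 2 * ‖w p1‖ ^ 2 := by rw [← Finset.mul_sum, hwsq]
      _ ≤ ∑ p1, ‖Matrix.toEuclideanLin S (w p1)‖ ^ 2 := by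
          refine Finset.sum_le_sum fun p1 _ => ?_
          calc σmin ^ 2 * ‖w p1‖ ^ 2 = (σmin * ‖w p1‖) ^ 2 := by ring
            _ ≤ _ := pow_le_pow_left₀ (by positivity) (hmin (w p1)) 2
  have hhisq : ‖T‖ ^ 2 ≤ (σmax * (M * ‖β‖)) ^ 2 := by
    rw [hTsq]
    calc ∑ p1, ‖Matrix.toEuclideanLin S (w p1)‖ ^ 2
        ≤ ∑ p1, σmax ^ 2 * ‖w p1‖ ^ 2 := by
          refine Finset.sum_le_sum fun p1 _ => ?_
          calc ‖Matrix.toEuclideanLin S (w p1)‖ ^ 2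
              ≤ (σmax * ‖w p1‖) ^ 2 := pow_le_pow_left₀ (norm_nonneg _) (hmax (w p1)) 2
            _ = σmax ^ 2 * ‖w p1‖ ^ 2 := by ring
      _ = σmax ^ 2 * (∑ l, ‖β l‖ ^ 2 * ‖χ l‖ ^ 2) := by rw [← Finset.mul_sum, hwsq]
      _ ≤ σmax ^ 2 * (M ^ 2 * ‖β‖ ^ 2) := by
          refine mul_le_mul_of_nonneg_left ?_ (sq_nonneg _)
          rw [hβsq, Finset.mul_sum]
          refine Finset.sum_le_sum fun l _ => ?_
          calc ‖β l‖ ^ 2 * ‖χ l‖ ^ 2 ≤ ‖β l‖ ^ 2 * M ^ 2 := by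
                refine mul_le_mul_of_nonneg_left ?_ (sq_nonneg _)
                exact pow_le_pow_left₀ (norm_nonneg _) (hMle l) 2
            _ = M ^ 2 * ‖β l‖ ^ 2 := by ring
      _ = (σmax * (M * ‖β‖)) ^ 2 := by ring
  have hTlow : σmin * (c * ‖β‖) ≤ ‖T‖ :=
    le_of_sq_le_sq (by linarith [hlowsq]) (norm_nonneg T)
  have hThi : ‖T‖ ≤ σmax * (M * ‖β‖) :=
    le_of_sq_le_sq (by linarith [hhisq]) (by positivity)
  constructor
  · calc c / (σmax / σmin) = σmin * (c * (1 / σmax)) := by field_simp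
      _ ≤ σmin * (c * ‖β‖) := by
          refine mul_le_mul_of_nonneg_left (mul_le_mul_of_nonneg_left hβlo hc0) hσmin.le
      _ ≤ ‖T‖ := hTlow
  · calc ‖T‖ ≤ σmax * (M * ‖β‖) := hThi
      _ ≤ σmax * (M * (1 / σmin)) := by
          refine mul_le_mul_of_nonneg_left (mul_le_mul_of_nonneg_left hβhi hM0) hσmax.le
      _ = (σmax / σmin) * M := by field_simp
end
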